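/- Let A be a metrizable abelian topological group. Then the Pontryagin dual Â (with the compact-open topology) is a k-space: a subset F ⊆ Â is closed whenever F ∩ Ξ is closed in Ξ for every compact subset Ξ ⊆ Â. -/

import Mathlib

open scoped Topology

noncomputable section

/-- The circle group `T = R/Z`. -/
abbrev Torus := AddCircle (1 : ℝ)

/-- `Λ₁`, the image of `[-1/4, 1/4]` in `T = R/Z`. -/
def Lam : Set Torus := (fun x : ℝ => (x : Torus)) '' Set.Icc (-(1/4)) (1/4)

/-- The Pontryagin dual: continuous characters into `T = R/Z`, with the compact-open
topology (the topology on `ContinuousAddMonoidHom` is induced from `C(A, T)`). -/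
abbrev PDual (A : Type*) [AddCommGroup A] [TopologicalSpace A] [IsTopologicalAddGroup A] :=
  ContinuousAddMonoidHom A Torus

/-- The polar `S^▷ = {χ ∈ Â : χ(S) ⊆ Λ₁}` of a subset `S ⊆ A`. -/
def polar {A : Type*} [AddCommGroup A] [TopologicalSpace A] [IsTopologicalAddGroup A]
    (S : Set A) : Set (PDual A) := {χ | ∀ s ∈ S, χ s ∈ Lam}

/-- The prepolar `Φ^◁ = {a ∈ A : χ(a) ∈ Λ₁ for all χ ∈ Φ}` of a set `Φ ⊆ Â`. -/
def prepolar {A : Type*} [AddCommGroup A] [TopologicalSpace A] [IsTopologicalAddGroup A]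
    (Φ : Set (PDual A)) : Set A := {a | ∀ χ ∈ Φ, χ a ∈ Lam}

/-- The evaluation homomorphism `α_A : A → Â̂`, `α_A(a)(χ) = χ(a)`. -/
def evalHom {A : Type*} [AddCommGroup A] [TopologicalSpace A] [IsTopologicalAddGroup A]
    (a : A) : PDual (PDual A) where
  toFun := fun χ => χ a
  map_zero' := rfl
  map_add' := fun _ _ => rfl
  continuous_toFun := continuous_eval_const a


variable {A : Type*} [AddCommGroup A] [TopologicalSpace A] [IsTopologicalAddGroup A]

section ChascoAux
open Set

lemma lam_closed : IsClosed Lam :=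
  ((isCompact_Icc.image (AddCircle.continuous_mk' 1))).isClosed

lemma zero_mem_Lam : (0 : Torus) ∈ Lam :=
  ⟨0, by norm_num, rfl⟩

lemma zero_mem_interior_Lam : (0 : Torus) ∈ interior Lam := by
  have hopen : IsOpen ((fun x : ℝ => (x : Torus)) '' Set.Ioo (-(1/4)) (1/4)) := by
    exact QuotientAddGroup.isOpenMap_coe _ isOpen_Ioo
  have hsub : ((fun x : ℝ => (x : Torus)) '' Set.Ioo (-(1/4)) (1/4)) ⊆ Lam :=
    Set.image_mono Set.Ioo_subset_Icc_self
  exact interior_maximal hsub hopen ⟨0, by norm_num, rfl⟩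

lemma torus_multiples (m : ℕ) (hm : 1 ≤ m) (x : Torus)
    (h : ∀ k : ℕ, 1 ≤ k → k ≤ m → k • x ∈ Lam) :
    ∃ r : ℝ, |r| ≤ 1 / (4 * m) ∧ x = (r : Torus) := by
  induction m, hm using Nat.le_induction with
  | base =>
    obtain ⟨r, hr, hrx⟩ := h 1 le_rfl le_rfl
    rw [one_smul] at hrx
    exact ⟨r, by rw [abs_le]; constructor <;> [linarith [hr.1]; linarith [hr.2]], hrx.symm⟩
  | succ m hm IH =>
    obtain ⟨r, hr, hrx⟩ := IH (fun k h1 h2 => h k h1 (h2.trans (Nat.le_succ m)))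
    obtain ⟨s, hs, hsx⟩ := h (m + 1) (by omega) le_rfl
    have hcoe : ((((m + 1 : ℕ) : ℝ) * r : ℝ) : Torus) = (m + 1 : ℕ) • x := by
      rw [hrx, ← AddCircle.coe_nsmul, nsmul_eq_mul]
    have h0 : ((((m + 1 : ℕ) : ℝ) * r - s : ℝ) : Torus) = 0 := by
      rw [AddCircle.coe_sub, hcoe, ← hsx, sub_self]
    obtain ⟨n, hn⟩ := (AddCircle.coe_eq_zero_iff 1).mp h0
    have hmr : |((m + 1 : ℕ) : ℝ) * r| ≤ 1 / 2 := by
      have h1 : (1:ℝ) ≤ (m:ℝ) := by exact_mod_cast hm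
      have : |((m + 1 : ℕ) : ℝ) * r| = ((m:ℝ) + 1) * |r| := by
        rw [abs_mul, abs_of_nonneg (by positivity : (0:ℝ) ≤ ((m+1:ℕ):ℝ))]
        push_cast; ring
      rw [this]
      have h4 : (0:ℝ) < 4 * m := by positivity
      calc ((m:ℝ) + 1) * |r| ≤ ((m:ℝ) + 1) * (1 / (4 * m)) := by
            apply mul_le_mul_of_nonneg_left hr; linarith
        _ ≤ 1 / 2 := by
            rw [mul_one_div, div_le_div_iff₀ h4 (by norm_num)]
            linarith
    have hn0 : n = 0 := by
      have hs' : |s| ≤ 1/4 := abs_le.mpr ⟨by linarith [hs.1], hs.2⟩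
      have he : (n:ℝ) = ((m + 1 : ℕ) : ℝ) * r - s := by rw [← hn]; simp
      have : |(n:ℝ)| < 1 := by
        rw [he]
        calc |((m + 1 : ℕ) : ℝ) * r - s| ≤ |((m + 1 : ℕ) : ℝ) * r| + |s| := abs_sub _ _
          _ < 1 := by linarith
      have := abs_lt.mp this
      have h1 : (-1:ℤ) < n := by exact_mod_cast this.1
      have h2 : n < 1 := by exact_mod_cast this.2
      omega
    have heq : ((m:ℝ) + 1) * r = s := by
      have he : (n:ℝ) = ((m + 1 : ℕ) : ℝ) * r - s := by rw [← hn]; simp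
      rw [hn0] at he; push_cast at he; linarith
    refine ⟨r, ?_, hrx⟩
    have hs' : |s| ≤ 1/4 := abs_le.mpr ⟨by linarith [hs.1], hs.2⟩
    have habs : ((m:ℝ)+1) * |r| ≤ 1/4 := by
      have : |((m:ℝ) + 1) * r| ≤ 1/4 := by rw [heq]; exact hs'
      rwa [abs_mul, abs_of_nonneg (by positivity : (0:ℝ) ≤ (m:ℝ)+1)] at this
    have hfin : |r| ≤ 1 / (4 * ((m:ℝ)+1)) := by
      rw [le_div_iff₀ (by positivity)]
      nlinarith
    push_cast
    exact hfin

lemma torus_small {V : Set Torus} (hV : V ∈ 𝓝 0) :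
    ∃ m : ℕ, 1 ≤ m ∧ ∀ x : Torus, (∀ k : ℕ, 1 ≤ k → k ≤ m → k • x ∈ Lam) → x ∈ V := by
  have hc : Continuous ((↑) : ℝ → Torus) := AddCircle.continuous_mk' 1
  have hpre : ((↑) : ℝ → Torus) ⁻¹' V ∈ 𝓝 (0 : ℝ) := by
    have := hc.continuousAt (x := (0:ℝ))
    exact this.preimage_mem_nhds (by simpa using hV)
  obtain ⟨ε, hε, hball⟩ := Metric.mem_nhds_iff.mp hpre
  obtain ⟨m, hm⟩ := exists_nat_one_div_lt hε
  refine ⟨m + 1, Nat.le_add_left _ _, fun x hx => ?_⟩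
  obtain ⟨r, hr, hrx⟩ := torus_multiples (m + 1) (Nat.le_add_left _ _) x hx
  have : |r| < ε := by
    have h1 : 1 / (4 * ((m:ℝ) + 1)) ≤ 1 / ((m:ℝ) + 1) := by
      apply one_div_le_one_div_of_le (by positivity); nlinarith [Nat.cast_nonneg (α := ℝ) m]
    calc |r| ≤ 1 / (4 * ((m+1:ℕ):ℝ)) := hr
      _ ≤ 1 / ((m:ℝ)+1) := by push_cast; exact h1
      _ < ε := hm
  have : r ∈ Metric.ball (0:ℝ) ε := by simpa [Real.dist_eq] using this
  rw [hrx]; exact hball this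

lemma torus_eq_zero {x : Torus} (h : ∀ k : ℕ, 1 ≤ k → k • x ∈ Lam) : x = 0 := by
  by_contra hx
  have hV : ({x}ᶜ : Set Torus) ∈ 𝓝 (0 : Torus) :=
    isOpen_compl_singleton.mem_nhds (by simpa using (Ne.symm hx))
  obtain ⟨m, hm, hsm⟩ := torus_small hV
  exact (hsm x fun k hk _ => h k hk) rfl

variable {A : Type*} [AddCommGroup A] [TopologicalSpace A] [IsTopologicalAddGroup A]

lemma polar_isClosed (S : Set A) : IsClosed (polar S) := by
  have : polar S = ⋂ s ∈ S, (fun χ : PDual A => χ s) ⁻¹' Lam := by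
    ext χ; simp [polar]
  rw [this]
  exact isClosed_biInter fun s _ => lam_closed.preimage (continuous_eval_const s)

lemma polar_anti {S T : Set A} (h : S ⊆ T) : polar T ⊆ polar S :=
  fun χ hχ s hs => hχ s (h hs)

lemma polar_union {S T : Set A} : polar (S ∪ T) = polar S ∩ polar T := by
  ext χ; constructor
  · exact fun h => ⟨fun s hs => h s (Or.inl hs), fun s hs => h s (Or.inr hs)⟩
  · rintro ⟨h1, h2⟩ s (hs | hs); exacts [h1 s hs, h2 s hs]

lemma zero_mem_polar (S : Set A) : (0 : PDual A) ∈ polar S :=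
  fun s _ => zero_mem_Lam

lemma polar_univ_subset : polar (univ : Set A) ⊆ {(0 : PDual A)} := by
  intro χ hχ
  have : ∀ a : A, χ a = 0 := fun a =>
    torus_eq_zero fun k _ => by
      rw [← map_nsmul]; exact hχ _ (mem_univ _)
  simp only [mem_singleton_iff]
  ext a; exact this a

lemma nsmul_nhds {U : Set A} (hU : U ∈ 𝓝 0) (m : ℕ) :
    ∃ W ∈ 𝓝 (0 : A), ∀ w ∈ W, ∀ k : ℕ, k ≤ m → k • w ∈ U := by
  have hcont : ∀ k : ℕ, (fun w : A => k • w) ⁻¹' U ∈ 𝓝 (0 : A) := fun k => by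
    have h : Continuous fun w : A => k • w := continuous_nsmul k
    exact h.continuousAt.preimage_mem_nhds (by simpa using hU)
  refine ⟨⋂ k ∈ Finset.range (m+1), (fun w : A => k • w) ⁻¹' U, ?_, ?_⟩
  · exact (Filter.biInter_finset_mem _).mpr fun k _ => hcont k
  · intro w hw k hk
    exact mem_iInter₂.mp hw k (Finset.mem_range.mpr (Nat.lt_succ_of_le hk))

lemma hom_small {U : Set A} (hU : U ∈ 𝓝 0) {V : Set Torus} (hV : V ∈ 𝓝 0) :
    ∃ W ∈ 𝓝 (0 : A), ∀ f : A →+ Torus, (∀ u ∈ U, f u ∈ Lam) → ∀ w ∈ W, f w ∈ V := by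
  obtain ⟨m, _, hm⟩ := torus_small hV
  obtain ⟨W, hW, hWk⟩ := nsmul_nhds hU m
  refine ⟨W, hW, fun f hf w hw => hm _ fun k h1 h2 => ?_⟩
  rw [← map_nsmul]
  exact hf _ (hWk w hw k h2)

/-- A plain additive map sending a neighborhood of zero into `Lam` is continuous. -/
lemma continuous_of_mapsTo_Lam {U : Set A} (hU : U ∈ 𝓝 0) (f : A →+ Torus)
    (hf : ∀ u ∈ U, f u ∈ Lam) : Continuous f := by
  apply continuous_of_continuousAt_zero f
  rw [ContinuousAt, map_zero]
  intro V hV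
  rw [Filter.mem_map]
  obtain ⟨W, hW, hWf⟩ := hom_small hU hV
  exact Filter.mem_of_superset hW fun w hw => hWf f hf w hw

lemma polar_equicontinuous {U : Set A} (hU : U ∈ 𝓝 0) :
    Equicontinuous (fun χ : polar U => ((χ : PDual A) : A → Torus)) := by
  intro x₀ Ue hUe
  rw [uniformity_eq_comap_nhds_zero Torus] at hUe
  obtain ⟨V, hV, hVsub⟩ := hUe
  obtain ⟨W, hW, hWf⟩ := hom_small hU hV
  have hmem : (fun x : A => x - x₀) ⁻¹' W ∈ 𝓝 x₀ := by
    have hc : Continuous fun x : A => x - x₀ := continuous_id.sub continuous_const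
    have ht : Filter.Tendsto (fun x : A => x - x₀) (𝓝 x₀) (𝓝 0) := by
      have := hc.continuousAt (x := x₀)
      rwa [ContinuousAt, sub_self] at this
    exact ht hW
  filter_upwards [hmem] with x hx χ
  apply hVsub
  show (χ : PDual A) x - (χ : PDual A) x₀ ∈ V
  rw [← map_sub]
  exact hWf ((χ : PDual A).toAddMonoidHom) (fun u hu => χ.2 u hu) _ hx

lemma equicontinuous_aux {U : Set A} (hU : U ∈ 𝓝 0) {ι : Type*} (F : ι → A → Torus)
    (hadd : ∀ i x y, F i (x + y) = F i x + F i y) (hF : ∀ i, ∀ u ∈ U, F i u ∈ Lam) :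
    Equicontinuous F := by
  intro x₀ Ue hUe
  rw [uniformity_eq_comap_nhds_zero Torus] at hUe
  obtain ⟨V, hV, hVsub⟩ := hUe
  obtain ⟨W, hW, hWf⟩ := hom_small hU hV
  have hmem : (fun x : A => x - x₀) ⁻¹' W ∈ 𝓝 x₀ := by
    have hc : Continuous fun x : A => x - x₀ := continuous_id.sub continuous_const
    have ht : Filter.Tendsto (fun x : A => x - x₀) (𝓝 x₀) (𝓝 0) := by
      have := hc.continuousAt (x := x₀)
      rwa [ContinuousAt, sub_self] at this
    exact ht hW
  filter_upwards [hmem] with x hx i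
  apply hVsub
  show F i x - F i x₀ ∈ V
  have : F i x - F i x₀ = AddMonoidHom.mk' (F i) (hadd i) (x - x₀) := by
    simp [map_sub]
  rw [this]
  exact hWf _ (fun u hu => hF i u hu) _ hx

lemma polar_isCompact {U : Set A} (hU : U ∈ 𝓝 0) : IsCompact (polar U) := by
  rw [(ContinuousAddMonoidHom.isInducing_toContinuousMap A Torus).isCompact_iff]
  set S : Set C(A, Torus) := ContinuousAddMonoidHom.toContinuousMap '' polar U with hS
  have hmemS : ∀ f ∈ S, (∀ x y, f (x + y) = f x + f y) ∧ ∀ u ∈ U, f u ∈ Lam := by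
    rintro f ⟨χ, hχ, rfl⟩
    exact ⟨fun x y => map_add χ x y, hχ⟩
  apply ArzelaAscoli.isCompact_of_equicontinuous
  · have heq : ContinuousMap.toFun '' S =
        {f : A → Torus | (∀ x y, f (x + y) = f x + f y) ∧ ∀ u ∈ U, f u ∈ Lam} := by
      apply Set.Subset.antisymm
      · rintro _ ⟨f, hf, rfl⟩
        exact hmemS f hf
      · rintro f ⟨hadd, hmem⟩
        have hcont : Continuous (AddMonoidHom.mk' f hadd) :=
          continuous_of_mapsTo_Lam hU _ hmem
        refine ⟨(⟨AddMonoidHom.mk' f hadd, hcont⟩ : PDual A).toContinuousMap,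
          ⟨⟨AddMonoidHom.mk' f hadd, hcont⟩, hmem, rfl⟩, rfl⟩
    rw [heq]
    have hcl : IsClosed {f : A → Torus | (∀ x y, f (x + y) = f x + f y) ∧ ∀ u ∈ U, f u ∈ Lam} := by
      apply IsClosed.inter
      · show IsClosed {f : A → Torus | ∀ x y, f (x + y) = f x + f y}
        have : {f : A → Torus | ∀ x y, f (x + y) = f x + f y} =
            ⋂ x, ⋂ y, {f : A → Torus | f (x + y) = f x + f y} := by ext; simp
        rw [this]
        exact isClosed_iInter fun x => isClosed_iInter fun y =>
          isClosed_eq (continuous_apply (x + y)) ((continuous_apply x).add (continuous_apply y))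
      · show IsClosed {f : A → Torus | ∀ u ∈ U, f u ∈ Lam}
        have : {f : A → Torus | ∀ u ∈ U, f u ∈ Lam} =
            ⋂ u ∈ U, {f : A → Torus | f u ∈ Lam} := by ext; simp
        rw [this]
        exact isClosed_biInter fun u _ => lam_closed.preimage (continuous_apply u)
    exact hcl.isCompact
  · exact equicontinuous_aux hU (fun f : S => ⇑(f : C(A, Torus)))
      (fun f x y => (hmemS f f.2).1 x y) (fun f u hu => (hmemS f f.2).2 u hu)

lemma polar_mem_nhds {S : Set A} (hS : IsCompact S) : polar S ∈ 𝓝 (0 : PDual A) := by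
  have hind := ContinuousAddMonoidHom.isInducing_toContinuousMap A Torus
  rw [hind.nhds_eq_comap]
  refine Filter.mem_comap.mpr ⟨{f : C(A, Torus) | Set.MapsTo f S (interior Lam)}, ?_, ?_⟩
  · refine (ContinuousMap.isOpen_setOf_mapsTo hS isOpen_interior).mem_nhds ?_
    intro s _
    show ((0 : PDual A) : A → Torus) s ∈ interior Lam
    simpa using zero_mem_interior_Lam
  · intro χ hχ s hs
    exact interior_subset (hχ hs)

lemma isCompact_insert_zero {E : ℕ → Set A} (hfin : ∀ n, (E n).Finite)
    (hsmall : ∀ O ∈ 𝓝 (0 : A), ∃ N, ∀ n, N ≤ n → E n ⊆ O) :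
    IsCompact (insert (0 : A) (⋃ n, E n)) := by
  apply isCompact_of_finite_subcover
  intro ι Uo hUo hcover
  classical
  have h0 : (0 : A) ∈ ⋃ i, Uo i := hcover (mem_insert _ _)
  obtain ⟨i0, hi0⟩ := mem_iUnion.mp h0
  obtain ⟨N, hN⟩ := hsmall (Uo i0) ((hUo i0).mem_nhds hi0)
  have hsub : insert (0 : A) (⋃ n, E n) \ Uo i0 ⊆ ⋃ n ∈ Iio N, E n := by
    rintro x ⟨hx, hxo⟩
    rcases hx with rfl | hx
    · exact absurd hi0 hxo
    obtain ⟨n, hn⟩ := mem_iUnion.mp hx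
    rcases lt_or_ge n N with h | h
    · exact mem_biUnion h hn
    · exact absurd (hN n h hn) hxo
  have hTfin : (insert (0 : A) (⋃ n, E n) \ Uo i0).Finite :=
    ((Set.finite_Iio N).biUnion fun n _ => hfin n).subset hsub
  obtain ⟨t, ht⟩ := hTfin.isCompact.elim_finite_subcover Uo hUo
    ((Set.diff_subset).trans hcover)
  refine ⟨insert i0 t, fun x hx => ?_⟩
  by_cases hxo : x ∈ Uo i0
  · exact mem_biUnion (Finset.mem_insert_self _ _) hxo
  · obtain ⟨i, hi, hxi⟩ := mem_iUnion₂.mp (ht ⟨hx, hxo⟩)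
    exact mem_biUnion (Finset.mem_insert_of_mem hi) hxi

lemma fip_step {F : Set (PDual A)} (hF : ∀ Ξ : Set (PDual A), IsCompact Ξ → IsClosed (F ∩ Ξ))
    {Un Un1 : Set A} (hUn1 : Un1 ∈ 𝓝 0)
    (B : Set A) (hinv : polar B ∩ F ∩ polar Un = ∅) :
    ∃ E : Set A, E ⊆ Un ∧ E.Finite ∧ polar (B ∪ E) ∩ F ∩ polar Un1 = ∅ := by
  set C : Set (PDual A) := (F ∩ polar Un1) ∩ polar B with hC
  have hCcl : IsClosed C := (hF _ (polar_isCompact hUn1)).inter (polar_isClosed B)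
  have hCcomp : IsCompact C :=
    (polar_isCompact hUn1).of_isClosed_subset hCcl fun χ hχ => hχ.1.2
  have hempty : (C ∩ ⋂ u : Un, {χ : PDual A | χ u ∈ Lam}) = ∅ := by
    rw [Set.eq_empty_iff_forall_notMem]
    rintro χ ⟨hχC, hχI⟩
    have hpUn : χ ∈ polar Un := fun u hu => mem_iInter.mp hχI ⟨u, hu⟩
    have : χ ∈ polar B ∩ F ∩ polar Un := ⟨⟨hχC.2, hχC.1.1⟩, hpUn⟩
    rw [hinv] at this
    exact this
  obtain ⟨t, ht⟩ := hCcomp.elim_finite_subfamily_closed _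
    (fun u : Un => lam_closed.preimage (continuous_eval_const (u : A))) hempty
  refine ⟨Subtype.val '' (t : Set Un), by rintro _ ⟨u, _, rfl⟩; exact u.2,
    (t.finite_toSet.image _), ?_⟩
  rw [Set.eq_empty_iff_forall_notMem]
  rintro χ ⟨⟨hpBE, hχF⟩, hpUn1⟩
  have hχC : χ ∈ C := ⟨⟨hχF, hpUn1⟩, fun b hb => hpBE b (Or.inl hb)⟩
  have hχI : χ ∈ ⋂ u ∈ t, {χ : PDual A | χ u ∈ Lam} := by
    refine mem_iInter₂.mpr fun u hu => ?_
    exact hpBE u (Or.inr ⟨u, hu, rfl⟩)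
  rw [Set.eq_empty_iff_forall_notMem] at ht
  exact ht χ ⟨hχC, hχI⟩

lemma zero_mem_of_closure [TopologicalSpace.MetrizableSpace A] {F : Set (PDual A)}
    (hF : ∀ Ξ : Set (PDual A), IsCompact Ξ → IsClosed (F ∩ Ξ))
    (h0 : (0 : PDual A) ∈ closure F) : (0 : PDual A) ∈ F := by
  by_contra h0F
  obtain ⟨V, hV⟩ := (𝓝 (0 : A)).exists_antitone_basis
  set U : ℕ → Set A := fun n => Nat.casesOn n univ V with hUdef
  have hUmem : ∀ n, U n ∈ 𝓝 (0 : A) := by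
    rintro (_ | n)
    · exact Filter.univ_mem
    · exact hV.1.mem_of_mem trivial
  have hUbasis : ∀ O ∈ 𝓝 (0 : A), ∃ j, ∀ n, j + 1 ≤ n → U n ⊆ O := by
    intro O hO
    obtain ⟨j, -, hj⟩ := hV.1.mem_iff.mp hO
    refine ⟨j, ?_⟩
    rintro (_ | k) hk
    · omega
    · exact (hV.2 (by omega : j ≤ k)).trans hj
  -- the recursive construction
  have hstep' : ∀ (B : Set A) (n : ℕ), ∃ E : Set A,
      polar B ∩ F ∩ polar (U n) = ∅ →
        E ⊆ U n ∧ E.Finite ∧ polar (B ∪ E) ∩ F ∩ polar (U (n + 1)) = ∅ := by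
    intro B n
    by_cases h : polar B ∩ F ∩ polar (U n) = ∅
    · obtain ⟨E, hE⟩ := fip_step hF (hUmem (n+1)) B h
      exact ⟨E, fun _ => hE⟩
    · exact ⟨∅, fun h' => absurd h' h⟩
  choose g hg using hstep'
  set B : ℕ → Set A := fun n => Nat.rec ∅ (fun k Bk => Bk ∪ g Bk k) n with hBdef
  have hB0 : B 0 = ∅ := rfl
  have hBsucc : ∀ n, B (n + 1) = B n ∪ g (B n) n := fun n => rfl
  have hinv : ∀ n, polar (B n) ∩ F ∩ polar (U n) = ∅ := by
    intro n
    induction n with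
    | zero =>
      rw [Set.eq_empty_iff_forall_notMem]
      rintro χ ⟨⟨-, hχF⟩, hχU⟩
      have : χ = 0 := polar_univ_subset hχU
      exact h0F (this ▸ hχF)
    | succ n ih =>
      rw [hBsucc n]
      exact (hg (B n) n ih).2.2
  set E : ℕ → Set A := fun n => g (B n) n with hEdef
  have hEprop : ∀ n, E n ⊆ U n ∧ (E n).Finite := fun n =>
    ⟨(hg (B n) n (hinv n)).1, (hg (B n) n (hinv n)).2.1⟩
  have hBsub : ∀ n, B n ⊆ insert (0 : A) (⋃ k, E k) := by
    intro n
    induction n with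
    | zero => rw [hB0]; exact empty_subset _
    | succ n ih =>
      rw [hBsucc n]
      exact union_subset ih ((subset_iUnion E n).trans (subset_insert _ _))
  set S : Set A := insert (0 : A) (⋃ n, E n) with hSdef
  have hScomp : IsCompact S := by
    apply isCompact_insert_zero (fun n => (hEprop n).2)
    intro O hO
    obtain ⟨j, hj⟩ := hUbasis O hO
    exact ⟨j + 1, fun n hn => (hEprop n).1.trans (hj n hn)⟩
  have hdisj : polar S ∩ F = ∅ := by
    rw [Set.eq_empty_iff_forall_notMem]
    rintro χ ⟨hχS, hχF⟩
    have hLamnhds : Lam ∈ 𝓝 (0 : Torus) :=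
      mem_nhds_iff.mpr ⟨interior Lam, interior_subset, isOpen_interior, zero_mem_interior_Lam⟩
    have hpre : (χ : A → Torus) ⁻¹' Lam ∈ 𝓝 (0 : A) := by
      have := (map_continuous χ).continuousAt (x := (0 : A))
      rw [ContinuousAt, map_zero] at this
      exact this hLamnhds
    obtain ⟨j, hj⟩ := hUbasis _ hpre
    have hχUn : χ ∈ polar (U (j + 1)) := fun u hu => hj (j + 1) le_rfl hu
    have hχB : χ ∈ polar (B (j + 1)) := polar_anti (hBsub (j + 1)) hχS
    have : χ ∈ polar (B (j + 1)) ∩ F ∩ polar (U (j + 1)) := ⟨⟨hχB, hχF⟩, hχUn⟩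
    rw [hinv (j + 1)] at this
    exact this
  have := mem_closure_iff_nhds.mp h0 _ (polar_mem_nhds hScomp)
  rw [hdisj] at this
  exact this.ne_empty rfl



end ChascoAux

/-- For a metrizable abelian topological group `A`, the Pontryagin dual `Â` is a
k-space: a subset `F ⊆ Â` is closed whenever `F ∩ Ξ` is closed for every compact
`Ξ ⊆ Â`. -/
theorem dual_kSpace [TopologicalSpace.MetrizableSpace A] :
    ∀ F : Set (PDual A),
      (∀ Ξ : Set (PDual A), IsCompact Ξ → IsClosed (F ∩ Ξ)) → IsClosed F := by
  intro F hF
  apply isClosed_of_closure_subset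
  intro χ₀ hχ₀
  set h : PDual A ≃ₜ PDual A := Homeomorph.subRight χ₀ with hh
  set F' : Set (PDual A) := h '' F with hF'def
  have hF' : ∀ Ξ : Set (PDual A), IsCompact Ξ → IsClosed (F' ∩ Ξ) := by
    intro Ξ hΞ
    have : F' ∩ Ξ = h '' (F ∩ h ⁻¹' Ξ) := (Set.image_inter_preimage h F Ξ).symm
    rw [this]
    exact (h.isClosedMap _ (hF _ (h.isCompact_preimage.mpr hΞ)))
  have h0' : (0 : PDual A) ∈ closure F' := by
    rw [hF'def, ← h.image_closure]
    exact ⟨χ₀, hχ₀, by simp [hh]⟩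
  obtain ⟨χ, hχF, hχ⟩ := zero_mem_of_closure hF' h0'
  have : χ = χ₀ := by
    have h2 : χ - χ₀ = 0 := hχ
    rwa [sub_eq_zero] at h2
  exact this ▸ hχF

end
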